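/- Let a ≥ b > 0, c > 0 and β > 0 satisfy c(a − b) > β. Define θ(λ) = c(a + b − a e^{−λ} − b e^{λ}) − λβ for λ > 0, and set γ = √(β² + 4 c² a b). Then the supremum of θ over λ > 0 is attained at λ* = log((γ − β)/(2 c b)) > 0, and sup_{λ>0} θ(λ) = c·( a + b − 2√(ab) · √( β²/(4 c² a b) + 1 ) ) − (β/2)·log(a/b) + (β/2)·log( (γ + β)/(γ − β) ). -/

import Mathlib

set_option maxHeartbeats 1600000 in
/-- Exact optimization of the Chernoff exponent `θ(λ) = c(a + b − a e^{−λ} − b e^{λ}) − λβ`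
over `λ > 0`, for positive reals `a ≥ b > 0`, `c > 0`, `β > 0` with `c(a−b) > β`:
the supremum is attained at `λ* = log((γ−β)/(2cb)) > 0`, where `γ = √(β² + 4c²ab)`, and
`sup θ = c(a + b − 2√(ab) √(β²/(4c²ab) + 1)) − (β/2) log(a/b) + (β/2) log((γ+β)/(γ−β))`. -/
theorem stmt5 (a b c β : ℝ) (hb : 0 < b) (hba : b ≤ a) (hc : 0 < c) (hβ : 0 < β)
    (hgap : β < c * (a - b)) :
    0 < Real.log ((Real.sqrt (β ^ 2 + 4 * c ^ 2 * a * b) - β) / (2 * c * b)) ∧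
    IsGreatest
      ((fun lam : ℝ => c * (a + b - a * Real.exp (-lam) - b * Real.exp lam) - lam * β) ''
        Set.Ioi 0)
      ((fun lam : ℝ => c * (a + b - a * Real.exp (-lam) - b * Real.exp lam) - lam * β)
        (Real.log ((Real.sqrt (β ^ 2 + 4 * c ^ 2 * a * b) - β) / (2 * c * b)))) ∧
    (fun lam : ℝ => c * (a + b - a * Real.exp (-lam) - b * Real.exp lam) - lam * β)
        (Real.log ((Real.sqrt (β ^ 2 + 4 * c ^ 2 * a * b) - β) / (2 * c * b)))
      = c * (a + b - 2 * Real.sqrt (a * b) * Real.sqrt (β ^ 2 / (4 * c ^ 2 * a * b) + 1))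
          - (β / 2) * Real.log (a / b)
          + (β / 2) * Real.log ((Real.sqrt (β ^ 2 + 4 * c ^ 2 * a * b) + β) /
              (Real.sqrt (β ^ 2 + 4 * c ^ 2 * a * b) - β)) := by
  have ha : 0 < a := lt_of_lt_of_le hb hba
  set γ := Real.sqrt (β ^ 2 + 4 * c ^ 2 * a * b) with hγdef
  have hargpos : 0 < β ^ 2 + 4 * c ^ 2 * a * b := by positivity
  have hγsq : γ ^ 2 = β ^ 2 + 4 * c ^ 2 * a * b := Real.sq_sqrt hargpos.le
  have hγpos : 0 < γ := Real.sqrt_pos.mpr hargpos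
  have hβγ : β < γ := by
    have hpos : 0 < 4 * c ^ 2 * a * b := by positivity
    have h1 : β ^ 2 < γ ^ 2 := by linarith
    exact lt_of_pow_lt_pow_left₀ 2 hγpos.le h1
  have h2cb : 0 < 2 * c * b := by positivity
  have hx1 : 2 * c * b < γ - β := by
    have h1 : (β + 2 * c * b) ^ 2 < γ ^ 2 := by nlinarith
    have := lt_of_pow_lt_pow_left₀ 2 hγpos.le h1
    linarith
  set x := (γ - β) / (2 * c * b) with hxdef
  have hx : 1 < x := (one_lt_div h2cb).mpr hx1
  have hxpos : 0 < x := lt_trans one_pos hx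
  have hlogpos : 0 < Real.log x := Real.log_pos hx
  have hquad : c * b * x ^ 2 + β * x = c * a := by
    rw [hxdef]; field_simp; nlinarith
  have hcax : c * a * x⁻¹ = c * b * x + β := by
    field_simp; nlinarith [hquad]
  have hexp : Real.exp (Real.log x) = x := Real.exp_log hxpos
  have hexpneg : Real.exp (-(Real.log x)) = x⁻¹ := by rw [Real.exp_neg, hexp]
  have hxγ : x = (γ - β) / (2 * c * b) := hxdef
  clear_value x
  clear_value γ
  refine ⟨hlogpos, ⟨⟨Real.log x, hlogpos, rfl⟩, ?_⟩, ?_⟩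
  · rintro y ⟨lam, -, rfl⟩
    simp only [hexp, hexpneg]
    obtain ⟨u, rfl⟩ : ∃ u, lam = Real.log x + u := ⟨lam - Real.log x, by ring⟩
    have heu : Real.exp (Real.log x + u) = x * Real.exp u := by
      rw [Real.exp_add, hexp]
    have hev : Real.exp (-(Real.log x + u)) = x⁻¹ * Real.exp (-u) := by
      rw [show -(Real.log x + u) = -Real.log x + -u by ring, Real.exp_add, hexpneg]
    rw [heu, hev]
    have h1 : u + 1 ≤ Real.exp u := Real.add_one_le_exp u
    have h2 : -u + 1 ≤ Real.exp (-u) := Real.add_one_le_exp (-u)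
    have hbx : 0 < c * b * x := by positivity
    have key : c * a * x⁻¹ * (Real.exp (-u) - 1) = (c * b * x + β) * (Real.exp (-u) - 1) := by
      rw [hcax]
    nlinarith [key,
      mul_nonneg hbx.le (by linarith : (0:ℝ) ≤ Real.exp u - 1 - u),
      mul_nonneg hbx.le (by linarith : (0:ℝ) ≤ Real.exp (-u) - 1 + u),
      mul_nonneg hβ.le (by linarith : (0:ℝ) ≤ Real.exp (-u) - 1 + u)]
  · simp only [hexp, hexpneg]
    have hsum : c * a * x⁻¹ + c * b * x = γ := by
      have h2 : c * b * x = (γ - β) / 2 := by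
        rw [hxγ]; field_simp
      rw [hcax, h2]; ring
    have hγterm : c * (2 * Real.sqrt (a * b) * Real.sqrt (β ^ 2 / (4 * c ^ 2 * a * b) + 1)) = γ := by
      have htnn : (0:ℝ) ≤ β ^ 2 / (4 * c ^ 2 * a * b) + 1 := by positivity
      have hnn : 0 ≤ c * (2 * Real.sqrt (a * b) * Real.sqrt (β ^ 2 / (4 * c ^ 2 * a * b) + 1)) := by
        positivity
      have hsq : (c * (2 * Real.sqrt (a * b) * Real.sqrt (β ^ 2 / (4 * c ^ 2 * a * b) + 1))) ^ 2
          = β ^ 2 + 4 * c ^ 2 * a * b := by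
        have e1 : Real.sqrt (a * b) ^ 2 = a * b := Real.sq_sqrt (by positivity)
        have e2 : Real.sqrt (β ^ 2 / (4 * c ^ 2 * a * b) + 1) ^ 2
            = β ^ 2 / (4 * c ^ 2 * a * b) + 1 := Real.sq_sqrt htnn
        rw [show (c * (2 * Real.sqrt (a * b) * Real.sqrt (β ^ 2 / (4 * c ^ 2 * a * b) + 1))) ^ 2
            = 4 * c ^ 2 * (Real.sqrt (a * b) ^ 2) * (Real.sqrt (β ^ 2 / (4 * c ^ 2 * a * b) + 1) ^ 2)
            by ring, e1, e2]
        field_simp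
      calc c * (2 * Real.sqrt (a * b) * Real.sqrt (β ^ 2 / (4 * c ^ 2 * a * b) + 1))
          = Real.sqrt ((c * (2 * Real.sqrt (a * b) * Real.sqrt (β ^ 2 / (4 * c ^ 2 * a * b) + 1))) ^ 2) :=
            (Real.sqrt_sq hnn).symm
        _ = γ := by rw [hsq]; exact hγdef.symm
    have hxsq : x ^ 2 = (a / b) * ((γ - β) / (γ + β)) := by
      rw [hxγ]; field_simp
      linear_combination (γ - β) * hγsq
    have hlog : 2 * Real.log x = Real.log (a / b) - Real.log ((γ + β) / (γ - β)) := by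
      have h1 : Real.log (x ^ 2) = 2 * Real.log x := by
        rw [Real.log_pow]; push_cast; ring
      have h2 : Real.log (x ^ 2) = Real.log (a / b) + Real.log ((γ - β) / (γ + β)) := by
        rw [hxsq, Real.log_mul (by positivity : (0:ℝ) < a / b).ne' (div_pos (by linarith) (by linarith)).ne']
      have h3 : Real.log ((γ - β) / (γ + β)) = -Real.log ((γ + β) / (γ - β)) := by
        rw [Real.log_div (by linarith) (by linarith), Real.log_div (by linarith) (by linarith)]
        ring
      rw [h3] at h2; linarith
    linear_combination -hsum + hγterm - (β / 2) * hlog
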